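/- Let D be a category, G : D ⥤ Cat a functor, and P : Grothendieck G ⥤ D the projection functor of the Grothendieck construction. Then the factorization category Factor_P(α) is connected for every morphism α of D if and only if the category G(d) is connected for every object d of D. -/

import Mathlib

open CategoryTheory

universe v₂ u₂ v u

variable {C : Type u₁} [Category.{v₁} C] {D : Type u₂'} [Category.{v₂'} D]

/-- The factorization category `Factor_F(α)` of a morphism `α : d ⟶ d'` of `D` through a
functor `F : C ⥤ D`: objects are triples `(c, u, v)` with `u ≫ v = α`. -/
structure Factor (F : C ⥤ D) {d d' : D} (α : d ⟶ d') where
  c : C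
  u : d ⟶ F.obj c
  v : F.obj c ⟶ d'
  fac : u ≫ v = α

instance Factor.category (F : C ⥤ D) {d d' : D} (α : d ⟶ d') : Category (Factor F α) where
  Hom X Y := { φ : X.c ⟶ Y.c // X.u ≫ F.map φ = Y.u ∧ F.map φ ≫ Y.v = X.v }
  id X := ⟨𝟙 X.c, by simp, by simp⟩
  comp {X Y Z} f g := ⟨f.1 ≫ g.1,
    by rw [Functor.map_comp, ← Category.assoc, f.2.1, g.2.1],
    by rw [Functor.map_comp, Category.assoc, g.2.2, f.2.2]⟩
  id_comp f := Subtype.ext (Category.id_comp f.1)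
  comp_id f := Subtype.ext (Category.comp_id f.1)
  assoc f g h := Subtype.ext (Category.assoc f.1 g.1 h.1)

namespace Stmt2Aux

variable {D : Type u} [Category.{v} D] (G : D ⥤ Cat.{v₂, u₂}) {d d' : D} (α : d ⟶ d')

lemma map_eq' {b b' : D} {f : b ⟶ b'} {v' : b' ⟶ d'} {v : b ⟶ d'} (h : f ≫ v' = v) :
    G.map v = G.map f ≫ G.map v' := by
  subst h; rw [G.map_comp]

lemma obj_eq' {b b' : D} {f : b ⟶ b'} {v' : b' ⟶ d'} {v : b ⟶ d'} (h : f ≫ v' = v)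
    (x : G.obj b) : (G.map v).toFunctor.obj x = (G.map v').toFunctor.obj ((G.map f).toFunctor.obj x) := by
  rw [map_eq' G h]; rfl

lemma obj_eq {X Y : Factor (Grothendieck.forget G) α} (φ : X ⟶ Y) :
    (G.map X.v).toFunctor.obj X.c.fiber = (G.map Y.v).toFunctor.obj ((G.map φ.1.base).toFunctor.obj X.c.fiber) :=
  obj_eq' G φ.2.2 _

lemma map_eq {X Y : Factor (Grothendieck.forget G) α} (φ : X ⟶ Y) :
    G.map X.v = G.map φ.1.base ≫ G.map Y.v :=
  map_eq' G φ.2.2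

lemma eqToHom_map_id_aux {A B : Type*} [Category A] [Category B] (F : A ⥤ B) {a a' : A}
    (p : F.obj a' = F.obj a) (q : a = a') : eqToHom p ≫ F.map (eqToHom q) = 𝟙 (F.obj a') := by
  cases q; simp

lemma eqToHom_map_comp_aux {A B : Type*} [Category A] [Category B] (F : A ⥤ B) {a a' b c : A}
    {x : B} (p : x = F.obj a) (q : a = a') (f : a' ⟶ b) (g : b ⟶ c) (r : x = F.obj a')
    (s : F.obj b = F.obj b) :
    eqToHom p ≫ F.map (eqToHom q ≫ f ≫ g) = eqToHom r ≫ F.map f ≫ eqToHom s ≫ F.map g := by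
  cases q; simp

/-- Push a factorization of `α : d ⟶ d'` through the projection down to the fiber `G(d')`. -/
def toFiber : Factor (Grothendieck.forget G) α ⥤ G.obj d' where
  obj X := (G.map X.v).toFunctor.obj X.c.fiber
  map {X Y} φ := eqToHom (obj_eq G α φ) ≫ (G.map Y.v).toFunctor.map φ.1.fiber
  map_id X := by
    simp [CategoryStruct.id, Grothendieck.id, eqToHom_map]
    exact eqToHom_map_id_aux _ _ _
  map_comp {X Y Z} f g := by
    have := Functor.congr_hom (congrArg Cat.Hom.toFunctor (map_eq G α g)) f.1.fiber
    dsimp [CategoryStruct.comp, Grothendieck.comp]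
    rw [this]
    simp [eqToHom_map]
    exact eqToHom_map_comp_aux _ _ _ _ _ _ _

/-- Include the fiber `G(d')` into the factorizations of `α : d ⟶ d'`. -/
def fromFiber : G.obj d' ⥤ Factor (Grothendieck.forget G) α where
  obj x := ⟨⟨d', x⟩, α, 𝟙 d', Category.comp_id α⟩
  map {x y} f := ⟨⟨𝟙 d', eqToHom (by simp) ≫ f⟩, by simp [Grothendieck.forget],
    by simp [Grothendieck.forget]⟩
  map_id x := Subtype.ext (Grothendieck.ext _ _ rfl (by simp [CategoryStruct.id, Grothendieck.id]; exact eqToHom_trans _ _))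
  map_comp {x y z} f g := Subtype.ext (Grothendieck.ext _ _ (by simp [CategoryStruct.comp,
    Grothendieck.comp]) (by
      dsimp [CategoryStruct.comp, Grothendieck.comp]
      simp [eqToHom_map, Functor.congr_hom (congrArg Cat.Hom.toFunctor (G.map_id d'))]
      erw [eqToHom_trans_assoc]))

end Stmt2Aux

/-- For the projection `P : Grothendieck G ⥤ D` of the Grothendieck construction of
`G : D ⥤ Cat`, all the factorization categories `Factor_P(α)` are connected if and only
if all the fibers `G(d)` are connected categories. -/
theorem stmt2 {D : Type u} [Category.{v} D] (G : D ⥤ Cat.{v₂, u₂}) :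
    (∀ {d d' : D} (α : d ⟶ d'), IsConnected (Factor (Grothendieck.forget G) α)) ↔
      ∀ d : D, IsConnected (G.obj d) := by
  constructor
  · intro h d
    haveI := h (𝟙 d)
    haveI : Nonempty (G.obj d) :=
      ⟨(Stmt2Aux.toFiber G (𝟙 d)).obj (Classical.arbitrary _)⟩
    apply zigzag_isConnected
    intro x y
    let ix : Factor (Grothendieck.forget G) (𝟙 d) := ⟨⟨d, x⟩, 𝟙 d, 𝟙 d, Category.comp_id _⟩
    let iy : Factor (Grothendieck.forget G) (𝟙 d) := ⟨⟨d, y⟩, 𝟙 d, 𝟙 d, Category.comp_id _⟩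
    have hz : Zigzag ix iy := isPreconnected_zigzag _ _
    have hz' := zigzag_obj_of_zigzag (Stmt2Aux.toFiber G (𝟙 d)) hz
    have e1 : Zigzag x ((Stmt2Aux.toFiber G (𝟙 d)).obj ix) :=
      Zigzag.of_hom (eqToHom (by simp [Stmt2Aux.toFiber, ix]; erw [G.map_id]; rfl))
    have e2 : Zigzag ((Stmt2Aux.toFiber G (𝟙 d)).obj iy) y :=
      Zigzag.of_hom (eqToHom (by simp [Stmt2Aux.toFiber, iy]; erw [G.map_id]; rfl))
    exact (e1.trans hz').trans e2
  · intro h d d' α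
    haveI := h d
    haveI := h d'
    haveI : Nonempty (Factor (Grothendieck.forget G) α) :=
      ⟨(Stmt2Aux.fromFiber G α).obj (Classical.arbitrary _)⟩
    apply zigzag_isConnected
    intro X Y
    have rX : X ⟶ (Stmt2Aux.fromFiber G α).obj ((G.map X.v).toFunctor.obj X.c.fiber) :=
      ⟨⟨X.v, 𝟙 _⟩, by simpa [Stmt2Aux.fromFiber, Grothendieck.forget] using X.fac,
        by simp [Stmt2Aux.fromFiber, Grothendieck.forget]⟩
    have rY : Y ⟶ (Stmt2Aux.fromFiber G α).obj ((G.map Y.v).toFunctor.obj Y.c.fiber) :=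
      ⟨⟨Y.v, 𝟙 _⟩, by simpa [Stmt2Aux.fromFiber, Grothendieck.forget] using Y.fac,
        by simp [Stmt2Aux.fromFiber, Grothendieck.forget]⟩
    exact (Zigzag.of_hom rX).trans
      ((zigzag_obj_of_zigzag (Stmt2Aux.fromFiber G α) (isPreconnected_zigzag _ _)).trans
        (Zigzag.of_inv rY))
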